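/- Non-convex FedProx convergence (bounded variance). Assume each F k is differentiable with L-Lipschitz gradient and satisfies the curvature lower bound with constant L₋, where 0 ≤ L₋ < μ and μ̄ := μ − L₋ > 0. Let wᵗ ∈ E satisfy ‖∇f(wᵗ)‖² ≥ ε for some ε > 0, and assume the bounded variance condition ∑ k, p k·‖∇F k (wᵗ) − ∇f(wᵗ)‖² ≤ σ². For each device k let w k⁺ be a γ-inexact solution of min h k (0 ≤ γ ≤ 1), let K ≥ 1, and set C := √(1 + σ²/ε) and ρ := 1/μ − (γ/μ + √2·(1+γ)/(μ̄·√K) + L·(1+γ)/(μ̄·μ))·C − (L·(1+γ)²/(2μ̄²) + L·(1+γ)²·(2√(2K)+2)/(μ̄²·K))·C². Then ∑_{s : Fin K → Fin N} (∏ j, p (s j)) · f((1/K)·∑ j, w (s j)⁺) ≤ f(wᵗ) − ρ·‖∇f(wᵗ)‖². -/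

import Mathlib

open scoped BigOperators

section Aux

local notation "⟪" x ", " y "⟫" => @inner ℝ _ _ x y

variable {E : Type*} [NormedAddCommGroup E] [InnerProductSpace ℝ E] [CompleteSpace E]

private theorem fedprox_hasDerivAt_line (φ : E → ℝ) (hφ : Differentiable ℝ φ) (x d : E) (t : ℝ) :
    HasDerivAt (fun t : ℝ => φ (x + t • d)) ⟪gradient φ (x + t • d), d⟫ t := by
  have hc : HasDerivAt (fun t : ℝ => x + t • d) d t := by
    simpa using ((hasDerivAt_id t).smul_const d).const_add x
  have hg := (hφ (x + t • d)).hasGradientAt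
  rw [hasGradientAt_iff_hasFDerivAt] at hg
  have h2 : HasDerivAt (fun t : ℝ => φ (x + t • d)) (fderiv ℝ φ (x + t • d) d) t :=
    (hφ (x + t • d)).hasFDerivAt.comp_hasDerivAt t hc
  rw [hg.fderiv] at h2
  simpa using h2
private theorem fedprox_grad_lower_mono (φ : E → ℝ) (hφ : Differentiable ℝ φ) {Lm : ℝ}
    (hconv : ConvexOn ℝ Set.univ (fun w => φ w + (Lm / 2) * ‖w‖ ^ 2)) (u v : E) :
    -(Lm * ‖u - v‖ ^ 2) ≤ ⟪gradient φ u - gradient φ v, u - v⟫ := by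
  set d := u - v with hd
  set g : ℝ → ℝ := fun t => φ (v + t • d) + (Lm / 2) * (‖v‖ ^ 2 + 2 * t * ⟪v, d⟫ + t ^ 2 * ‖d‖ ^ 2)
    with hgdef
  have hline : ∀ t : ℝ, (AffineMap.lineMap v u : ℝ →ᵃ[ℝ] E) t = v + t • d := by
    intro t; simp [AffineMap.lineMap_apply, hd]; abel
  have hnorm : ∀ t : ℝ, ‖v + t • d‖ ^ 2 = ‖v‖ ^ 2 + 2 * t * ⟪v, d⟫ + t ^ 2 * ‖d‖ ^ 2 := by
    intro t
    rw [norm_add_sq_real, real_inner_smul_right, norm_smul, Real.norm_eq_abs]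
    rw [mul_pow, sq_abs]
    ring
  have hgconv : ConvexOn ℝ Set.univ g := by
    have h0 := hconv.comp_affineMap (AffineMap.lineMap v u : ℝ →ᵃ[ℝ] E)
    have : ((fun w => φ w + (Lm / 2) * ‖w‖ ^ 2) ∘ (AffineMap.lineMap v u : ℝ →ᵃ[ℝ] E)) = g := by
      funext t
      simp only [Function.comp_apply, hline t, hgdef, hnorm t]
    rw [this] at h0
    simpa using h0
  have hg' : ∀ t : ℝ, HasDerivAt g
      (⟪gradient φ (v + t • d), d⟫ + (Lm / 2) * (2 * ⟪v, d⟫ + 2 * t * ‖d‖ ^ 2)) t := by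
    intro t
    have h1 := fedprox_hasDerivAt_line φ hφ v d t
    have h2 : HasDerivAt (fun t : ℝ => (Lm / 2) * (‖v‖ ^ 2 + 2 * t * ⟪v, d⟫ + t ^ 2 * ‖d‖ ^ 2))
        ((Lm / 2) * (2 * ⟪v, d⟫ + 2 * t * ‖d‖ ^ 2)) t := by
      have : HasDerivAt (fun t : ℝ => ‖v‖ ^ 2 + 2 * t * ⟪v, d⟫ + t ^ 2 * ‖d‖ ^ 2)
          (2 * ⟪v, d⟫ + 2 * t * ‖d‖ ^ 2) t := by
        have ha : HasDerivAt (fun t : ℝ => 2 * t * ⟪v, d⟫) (2 * ⟪v, d⟫) t := by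
          simpa [mul_comm, mul_assoc] using
            ((hasDerivAt_id t).const_mul 2).mul_const ⟪v, d⟫
        have hb : HasDerivAt (fun t : ℝ => t ^ 2 * ‖d‖ ^ 2) (2 * t * ‖d‖ ^ 2) t := by
          have : HasDerivAt (fun t : ℝ => t ^ 2 * ‖d‖ ^ 2) (((2 : ℕ) : ℝ) * t ^ (2 - 1) * ‖d‖ ^ 2) t :=
            (hasDerivAt_pow 2 t).mul_const (‖d‖ ^ 2)
          convert this using 1
          push_cast; ring
        have h3 : HasDerivAt (fun t : ℝ => ‖v‖ ^ 2 + 2 * t * ⟪v, d⟫ + t ^ 2 * ‖d‖ ^ 2)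
            (0 + 2 * ⟪v, d⟫ + 2 * t * ‖d‖ ^ 2) t := ((hasDerivAt_const t (‖v‖ ^ 2)).add ha).add hb
        simpa using h3
      exact this.const_mul (Lm / 2)
    exact h1.add h2
  have h01 : (0:ℝ) < 1 := one_pos
  have hs1 := hgconv.le_slope_of_hasDerivAt (Set.mem_univ 0) (Set.mem_univ 1) h01 (hg' 0)
  have hs2 := hgconv.slope_le_of_hasDerivAt (Set.mem_univ 0) (Set.mem_univ 1) h01 (hg' 1)
  have hle := hs1.trans hs2
  have e0 : v + (0:ℝ) • d = v := by simp
  have e1 : v + (1:ℝ) • d = u := by simp [hd]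
  rw [e0, e1] at hle
  have := hle
  rw [inner_sub_left]
  nlinarith [this]
private theorem fedprox_descent_lemma (φ : E → ℝ) (hφ : Differentiable ℝ φ) {L : ℝ} (hL : 0 ≤ L)
    (hlip : LipschitzWith (Real.toNNReal L) (gradient φ)) (x y : E) :
    φ y ≤ φ x + ⟪gradient φ x, y - x⟫ + L / 2 * ‖y - x‖ ^ 2 := by
  set d := y - x with hd
  set G : ℝ → ℝ := fun t => ⟪gradient φ (x + t • d), d⟫ with hG
  have hderiv : ∀ t : ℝ, HasDerivAt (fun t : ℝ => φ (x + t • d)) (G t) t :=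
    fun t => fedprox_hasDerivAt_line φ hφ x d t
  have hGcont : Continuous G := by
    apply Continuous.inner
    · exact hlip.continuous.comp (by continuity)
    · exact continuous_const
  have hint : ∫ t in (0:ℝ)..1, G t = φ (x + (1:ℝ) • d) - φ (x + (0:ℝ) • d) :=
    intervalIntegral.integral_eq_sub_of_hasDerivAt (f := fun t : ℝ => φ (x + t • d))
      (fun t _ => hderiv t) (hGcont.intervalIntegrable 0 1)
  have hbound : ∀ t ∈ Set.Icc (0:ℝ) 1, G t ≤ ⟪gradient φ x, d⟫ + L * ‖d‖ ^ 2 * t := by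
    intro t ht
    have h1 : G t - ⟪gradient φ x, d⟫ = ⟪gradient φ (x + t • d) - gradient φ x, d⟫ := by
      rw [inner_sub_left]
    have h2 : ⟪gradient φ (x + t • d) - gradient φ x, d⟫ ≤
        ‖gradient φ (x + t • d) - gradient φ x‖ * ‖d‖ := real_inner_le_norm _ _
    have h3 : ‖gradient φ (x + t • d) - gradient φ x‖ ≤ L * (t * ‖d‖) := by
      have h := hlip.dist_le_mul (x + t • d) x
      rw [Real.coe_toNNReal L hL, dist_eq_norm, dist_eq_norm] at h
      have e : x + t • d - x = t • d := by abel
      rw [e, norm_smul, Real.norm_eq_abs, abs_of_nonneg ht.1] at h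
      exact h
    nlinarith [norm_nonneg d, mul_le_mul_of_nonneg_right h3 (norm_nonneg d)]
  have hcont2 : Continuous (fun t : ℝ => L * ‖d‖ ^ 2 * t) := by continuity
  have hmono : ∫ t in (0:ℝ)..1, G t ≤
      ∫ t in (0:ℝ)..1, (⟪gradient φ x, d⟫ + L * ‖d‖ ^ 2 * t) := by
    apply intervalIntegral.integral_mono_on zero_le_one
      (hGcont.intervalIntegrable 0 1)
      ((continuous_const.add hcont2).intervalIntegrable 0 1)
    exact hbound
  have hval : ∫ t in (0:ℝ)..1, (⟪gradient φ x, d⟫ + L * ‖d‖ ^ 2 * t) =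
      ⟪gradient φ x, d⟫ + L / 2 * ‖d‖ ^ 2 := by
    rw [intervalIntegral.integral_add intervalIntegrable_const
      (hcont2.intervalIntegrable 0 1)]
    rw [intervalIntegral.integral_const_mul, integral_id]
    simp
    ring
  have e1 : x + (1:ℝ) • d = y := by simp [hd]
  have e0 : x + (0:ℝ) • d = x := by simp
  rw [e1, e0] at hint
  linarith [hmono.trans_eq hval, hint]
private theorem fedprox_grad_sum {N : ℕ} (p : Fin N → ℝ) (F : Fin N → E → ℝ) (f : E → ℝ)
    (hf : ∀ w, f w = ∑ k, p k * F k w)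
    (hFdiff : ∀ k, Differentiable ℝ (F k)) (x : E) :
    HasGradientAt f (∑ k, p k • gradient (F k) x) x := by
  rw [hasGradientAt_iff_hasFDerivAt]
  have hsum : HasFDerivAt (fun w => ∑ k, p k * F k w)
      (∑ k, p k • (InnerProductSpace.toDual ℝ E (gradient (F k) x))) x := by
    apply HasFDerivAt.fun_sum
    intro k _
    exact (hasGradientAt_iff_hasFDerivAt.mp ((hFdiff k x).hasGradientAt)).const_mul (p k)
  have hfeq : f = fun w => ∑ k, p k * F k w := funext hf
  rw [hfeq]
  refine hsum.congr_fderiv ?_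
  symm
  rw [map_sum]
  congr 1
  funext k
  rw [map_smul]

private theorem fedprox_gradient_sum_eq {N : ℕ} (p : Fin N → ℝ) (F : Fin N → E → ℝ) (f : E → ℝ)
    (hf : ∀ w, f w = ∑ k, p k * F k w)
    (hFdiff : ∀ k, Differentiable ℝ (F k)) (x : E) :
    gradient f x = ∑ k, p k • gradient (F k) x :=
  (fedprox_grad_sum p F f hf hFdiff x).gradient

end Aux

private theorem fedprox_master_sum {K N : ℕ} (q : Fin K → Fin N → ℝ) :
    ∑ s : Fin K → Fin N, ∏ j, q j (s j) = ∏ j, ∑ k, q j k := by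
  rw [Finset.prod_univ_sum]
  simp [Fintype.piFinset_univ]

-- helper: product over update
private theorem fedprox_prod_update_eval {K N : ℕ} (base : Fin K → Fin N → ℝ) (j₀ : Fin K)
    (v : Fin N → ℝ) (s : Fin K → Fin N) :
    ∏ j, (Function.update base j₀ v) j (s j)
      = v (s j₀) * ∏ j ∈ Finset.univ.erase j₀, base j (s j) := by
  rw [← Finset.mul_prod_erase Finset.univ (fun j => (Function.update base j₀ v) j (s j))
      (Finset.mem_univ j₀)]
  rw [Function.update_self]
  congr 1
  apply Finset.prod_congr rfl
  intro j hj
  rw [Function.update_of_ne (Finset.ne_of_mem_erase hj)]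

private theorem fedprox_marg1 {K N : ℕ} (p : Fin N → ℝ) (hp1 : ∑ k, p k = 1)
    (j₀ : Fin K) (g : Fin N → ℝ) :
    ∑ s : Fin K → Fin N, (∏ j, p (s j)) * g (s j₀) = ∑ k, p k * g k := by
  set q : Fin K → Fin N → ℝ :=
    Function.update (fun (_ : Fin K) (k : Fin N) => p k) j₀ (fun k => p k * g k) with hq
  have key : ∀ s : Fin K → Fin N, (∏ j, p (s j)) * g (s j₀) = ∏ j, q j (s j) := by
    intro s
    rw [hq, fedprox_prod_update_eval]
    rw [← Finset.mul_prod_erase Finset.univ (fun j => p (s j)) (Finset.mem_univ j₀)]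
    ring
  have e1 : ∑ s : Fin K → Fin N, (∏ j, p (s j)) * g (s j₀)
      = ∑ s : Fin K → Fin N, ∏ j, q j (s j) := Finset.sum_congr rfl fun s _ => key s
  rw [e1, fedprox_master_sum]
  have e2 : ∀ j, ∑ k, q j k = if j = j₀ then ∑ k, p k * g k else 1 := by
    intro j
    by_cases h : j = j₀
    · subst h; rw [hq]; simp
    · rw [hq, Function.update_of_ne h]; simp [hp1, h]
  rw [Finset.prod_congr rfl fun j _ => e2 j]
  rw [Finset.prod_ite_eq' Finset.univ j₀ (fun _ => ∑ k, p k * g k)]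
  simp

private theorem fedprox_prod_update_eval' {K N : ℕ} (base : Fin K → Fin N → ℝ) {j₀ : Fin K}
    (v : Fin N → ℝ) (s : Fin K → Fin N) (T : Finset (Fin K)) (hj : j₀ ∈ T) :
    ∏ j ∈ T, (Function.update base j₀ v) j (s j)
      = v (s j₀) * ∏ j ∈ T.erase j₀, base j (s j) := by
  rw [← Finset.mul_prod_erase T (fun j => (Function.update base j₀ v) j (s j)) hj]
  rw [Function.update_self]
  congr 1
  apply Finset.prod_congr rfl
  intro j hj'
  rw [Function.update_of_ne (Finset.ne_of_mem_erase hj')]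

private theorem fedprox_marg2 {K N : ℕ} (p : Fin N → ℝ) (hp1 : ∑ k, p k = 1)
    {j₀ j₁ : Fin K} (hne : j₀ ≠ j₁) (Φ : Fin N → Fin N → ℝ) :
    ∑ s : Fin K → Fin N, (∏ j, p (s j)) * Φ (s j₀) (s j₁)
      = ∑ k, ∑ l, (p k * p l) * Φ k l := by
  have hj₀mem : j₀ ∈ Finset.univ.erase j₁ :=
    Finset.mem_erase.mpr ⟨hne, Finset.mem_univ _⟩
  -- inner sum identity for fixed k l
  have inner : ∀ k l : Fin N, ∑ s : Fin K → Fin N,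
      (∏ j, p (s j)) * ((if s j₀ = k then (1:ℝ) else 0) * (if s j₁ = l then (1:ℝ) else 0))
      = p k * p l := by
    intro k l
    set v₀ : Fin N → ℝ := fun a => p a * (if a = k then (1:ℝ) else 0) with hv₀
    set v₁ : Fin N → ℝ := fun a => p a * (if a = l then (1:ℝ) else 0) with hv₁
    set q : Fin K → Fin N → ℝ :=
      Function.update (Function.update (fun (_ : Fin K) (a : Fin N) => p a) j₀ v₀) j₁ v₁ with hq
    have key : ∀ s : Fin K → Fin N,
        (∏ j, p (s j)) * ((if s j₀ = k then (1:ℝ) else 0) * (if s j₁ = l then (1:ℝ) else 0))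
        = ∏ j, q j (s j) := by
      intro s
      rw [hq, fedprox_prod_update_eval' _ _ _ _ (Finset.mem_univ j₁),
          fedprox_prod_update_eval' _ _ _ _ hj₀mem]
      rw [← Finset.mul_prod_erase Finset.univ (fun j => p (s j)) (Finset.mem_univ j₁),
          ← Finset.mul_prod_erase _ (fun j => p (s j)) hj₀mem]
      rw [hv₀, hv₁]
      simp only []
      by_cases h0 : s j₀ = k <;> by_cases h1 : s j₁ = l <;> simp [h0, h1] <;> ring
    have e1 : ∑ s : Fin K → Fin N,
        (∏ j, p (s j)) * ((if s j₀ = k then (1:ℝ) else 0) * (if s j₁ = l then (1:ℝ) else 0))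
        = ∑ s : Fin K → Fin N, ∏ j, q j (s j) := Finset.sum_congr rfl fun s _ => key s
    rw [e1, fedprox_master_sum]
    have hsum₀ : ∑ a, v₀ a = p k := by rw [hv₀]; simp
    have hsum₁ : ∑ a, v₁ a = p l := by rw [hv₁]; simp
    have e2 : ∀ j, ∑ a, q j a = if j = j₁ then p l else if j = j₀ then p k else 1 := by
      intro j
      by_cases h1 : j = j₁
      · subst h1; rw [hq]; simp [Function.update_self, hsum₁]
      · by_cases h0 : j = j₀
        · subst h0; rw [hq, Function.update_of_ne h1, Function.update_self]
          simp [hsum₀, h1]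
        · rw [hq, Function.update_of_ne h1, Function.update_of_ne h0]
          simp [hp1, h1, h0]
    rw [Finset.prod_congr rfl fun j _ => e2 j]
    rw [← Finset.mul_prod_erase Finset.univ _ (Finset.mem_univ j₁),
        ← Finset.mul_prod_erase _ _ hj₀mem]
    rw [if_pos rfl, if_neg hne, if_pos rfl]
    have : ∏ j ∈ (Finset.univ.erase j₁).erase j₀,
        (if j = j₁ then p l else if j = j₀ then p k else 1) = 1 := by
      apply Finset.prod_eq_one
      intro j hj
      have hj0 : j ≠ j₀ := Finset.ne_of_mem_erase hj
      have hj1 : j ≠ j₁ := Finset.ne_of_mem_erase (Finset.mem_of_mem_erase hj)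
      simp [hj0, hj1]
    rw [this]
    ring
  -- expansion
  have expand : ∀ s : Fin K → Fin N,
      ∑ k, ∑ l, ((∏ j, p (s j)) * ((if s j₀ = k then (1:ℝ) else 0) * (if s j₁ = l then (1:ℝ) else 0)) * Φ k l)
      = (∏ j, p (s j)) * Φ (s j₀) (s j₁) := by
    intro s
    have step : ∀ k, ∑ l, ((∏ j, p (s j)) * ((if s j₀ = k then (1:ℝ) else 0) * (if s j₁ = l then (1:ℝ) else 0)) * Φ k l)
        = if s j₀ = k then (∏ j, p (s j)) * Φ k (s j₁) else 0 := by
      intro k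
      by_cases h : s j₀ = k
      · simp only [h, if_true, one_mul]
        rw [Finset.sum_eq_single (s j₁)]
        · simp
        · intro l _ hl; simp [Ne.symm hl, hl]
        · simp
      · simp [h]
    rw [Finset.sum_congr rfl fun k _ => step k]
    rw [Finset.sum_ite_eq Finset.univ (s j₀) (fun k => (∏ j, p (s j)) * Φ k (s j₁))]
    simp
  calc ∑ s : Fin K → Fin N, (∏ j, p (s j)) * Φ (s j₀) (s j₁)
      = ∑ s : Fin K → Fin N, ∑ k, ∑ l,
          ((∏ j, p (s j)) * ((if s j₀ = k then (1:ℝ) else 0) * (if s j₁ = l then (1:ℝ) else 0)) * Φ k l) :=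
        (Finset.sum_congr rfl fun s _ => (expand s).symm)
    _ = ∑ k, ∑ s : Fin K → Fin N, ∑ l,
          ((∏ j, p (s j)) * ((if s j₀ = k then (1:ℝ) else 0) * (if s j₁ = l then (1:ℝ) else 0)) * Φ k l) :=
        Finset.sum_comm
    _ = ∑ k, ∑ l, ∑ s : Fin K → Fin N,
          ((∏ j, p (s j)) * ((if s j₀ = k then (1:ℝ) else 0) * (if s j₁ = l then (1:ℝ) else 0)) * Φ k l) :=
        Finset.sum_congr rfl fun k _ => Finset.sum_comm
    _ = ∑ k, ∑ l, (p k * p l) * Φ k l := by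
        apply Finset.sum_congr rfl; intro k _
        apply Finset.sum_congr rfl; intro l _
        rw [← Finset.sum_mul, inner k l]

local notation "⟪" x ", " y "⟫" => @inner ℝ _ _ x y

private theorem fedprox_sq_add_le (a b : ℝ) : (a + b) ^ 2 ≤ 2 * a ^ 2 + 2 * b ^ 2 := by
  nlinarith [sq_nonneg (a - b)]

set_option maxHeartbeats 2000000 in
/-- Non-convex FedProx convergence under a bounded variance assumption. -/
theorem fedprox_bounded_variance_descent
    {E : Type*} [NormedAddCommGroup E] [InnerProductSpace ℝ E] [CompleteSpace E]
    {N : ℕ} (hN : 1 ≤ N) (p : Fin N → ℝ)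
    (hp : ∀ k, 0 ≤ p k) (hp1 : ∑ k, p k = 1)
    (F : Fin N → E → ℝ) (f : E → ℝ) (hf : ∀ w, f w = ∑ k, p k * F k w)
    {L : ℝ} (hL : 0 ≤ L)
    (hFdiff : ∀ k, Differentiable ℝ (F k))
    (hFlip : ∀ k, LipschitzWith (Real.toNNReal L) (gradient (F k)))
    {Lm μ : ℝ} (hLm : 0 ≤ Lm) (hμ : Lm < μ)
    (hcurv : ∀ k, ConvexOn ℝ Set.univ (fun w => F k w + (Lm / 2) * ‖w‖ ^ 2))
    (wt : E) {ε : ℝ} (hε : 0 < ε) (hgrad : ε ≤ ‖gradient f wt‖ ^ 2)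
    {σ : ℝ}
    (hvar : ∑ k, p k * ‖gradient (F k) wt - gradient f wt‖ ^ 2 ≤ σ ^ 2)
    {γ : ℝ} (hγ0 : 0 ≤ γ) (hγ1 : γ ≤ 1)
    (wplus : Fin N → E)
    (hinexact : ∀ k,
      ‖gradient (F k) (wplus k) + μ • (wplus k - wt)‖ ≤ γ * ‖gradient (F k) wt‖)
    {K : ℕ} (hK : 1 ≤ K)
    (C ρ : ℝ) (hC : C = Real.sqrt (1 + σ ^ 2 / ε))
    (hρ : ρ = 1 / μ
        - (γ / μ + Real.sqrt 2 * (1 + γ) / ((μ - Lm) * Real.sqrt K)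
            + L * (1 + γ) / ((μ - Lm) * μ)) * C
        - (L * (1 + γ) ^ 2 / (2 * (μ - Lm) ^ 2)
            + L * (1 + γ) ^ 2 * (2 * Real.sqrt (2 * K) + 2) / ((μ - Lm) ^ 2 * K)) * C ^ 2) :
    ∑ s : Fin K → Fin N, (∏ j, p (s j)) * f ((1 / (K : ℝ)) • ∑ j, wplus (s j))
      ≤ f wt - ρ * ‖gradient f wt‖ ^ 2 := by
  classical
  have hμpos : 0 < μ := lt_of_le_of_lt hLm hμ
  have hmb : 0 < μ - Lm := sub_pos.mpr hμ
  have hKne : (K : ℝ) ≠ 0 := Nat.cast_ne_zero.mpr (by omega)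
  have hKpos : (0 : ℝ) < K := Nat.cast_pos.mpr (by omega)
  have h1γ : (0 : ℝ) ≤ 1 + γ := by linarith
  have hC0 : 0 ≤ C := hC ▸ Real.sqrt_nonneg _
  have hCsq : C ^ 2 = 1 + σ ^ 2 / ε := by rw [hC]; exact Real.sq_sqrt (by positivity)
  have hgradf : ∀ x, gradient f x = ∑ k, p k • gradient (F k) x := fun x =>
    fedprox_gradient_sum_eq p F f hf hFdiff x
  have hfdiff : Differentiable ℝ f := fun x =>
    (fedprox_grad_sum p F f hf hFdiff x).differentiableAt
  have hLcoe : (Real.toNNReal L : ℝ) = L := Real.coe_toNNReal L hL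
  have hFlip' : ∀ k (a b : E), ‖gradient (F k) a - gradient (F k) b‖ ≤ L * ‖a - b‖ := by
    intro k a b
    have h := (hFlip k).dist_le_mul a b
    rwa [hLcoe, dist_eq_norm, dist_eq_norm] at h
  have hflip : LipschitzWith (Real.toNNReal L) (gradient f) := by
    apply LipschitzWith.of_dist_le_mul
    intro a b
    rw [dist_eq_norm, dist_eq_norm, hgradf a, hgradf b, hLcoe, ← Finset.sum_sub_distrib]
    calc ‖∑ k, (p k • gradient (F k) a - p k • gradient (F k) b)‖
        ≤ ∑ k, ‖p k • gradient (F k) a - p k • gradient (F k) b‖ := norm_sum_le _ _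
      _ ≤ ∑ k, p k * (L * ‖a - b‖) := by
          apply Finset.sum_le_sum
          intro k _
          rw [← smul_sub, norm_smul, Real.norm_eq_abs, abs_of_nonneg (hp k)]
          exact mul_le_mul_of_nonneg_left (hFlip' k a b) (hp k)
      _ = L * ‖a - b‖ := by rw [← Finset.sum_mul, hp1, one_mul]
  -- per-device bound
  have hd : ∀ k, ‖wplus k - wt‖ ≤ (1 + γ) * ‖gradient (F k) wt‖ / (μ - Lm) := by
    intro k
    have h1 := fedprox_grad_lower_mono (F k) (hFdiff k) (hcurv k) (wplus k) wt
    have h2 : ⟪gradient (F k) (wplus k) - gradient (F k) wt, wplus k - wt⟫ =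
        ⟪gradient (F k) (wplus k) + μ • (wplus k - wt), wplus k - wt⟫
          - μ * ‖wplus k - wt‖ ^ 2 - ⟪gradient (F k) wt, wplus k - wt⟫ := by
      rw [inner_sub_left, inner_add_left, real_inner_smul_left, real_inner_self_eq_norm_sq]
      ring
    have h3 : ⟪gradient (F k) (wplus k) + μ • (wplus k - wt), wplus k - wt⟫
        ≤ γ * ‖gradient (F k) wt‖ * ‖wplus k - wt‖ :=
      (real_inner_le_norm _ _).trans
        (mul_le_mul_of_nonneg_right (hinexact k) (norm_nonneg _))
    have h4 : -⟪gradient (F k) wt, wplus k - wt⟫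
        ≤ ‖gradient (F k) wt‖ * ‖wplus k - wt‖ := by
      have h := abs_real_inner_le_norm (gradient (F k) wt) (wplus k - wt)
      have := (abs_le.mp h).1
      linarith
    have hkey : ‖wplus k - wt‖ * (μ - Lm) * ‖wplus k - wt‖
        ≤ ((1 + γ) * ‖gradient (F k) wt‖) * ‖wplus k - wt‖ := by nlinarith
    rcases eq_or_lt_of_le (norm_nonneg (wplus k - wt)) with h0 | h0
    · rw [← h0]
      positivity
    · rw [le_div_iff₀ hmb]
      exact le_of_mul_le_mul_right hkey h0
  -- variance bounds
  have hA2 : ∑ k, p k * ‖gradient (F k) wt‖ ^ 2 ≤ C ^ 2 * ‖gradient f wt‖ ^ 2 := by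
    have hgsum : ∑ k, p k • gradient (F k) wt = gradient f wt := (hgradf wt).symm
    have hmid : ∑ k, p k * ⟪gradient (F k) wt - gradient f wt, gradient f wt⟫ = 0 := by
      have e1 : ∑ k, p k * ⟪gradient (F k) wt - gradient f wt, gradient f wt⟫
          = ⟪∑ k, p k • (gradient (F k) wt - gradient f wt), gradient f wt⟫ := by
        rw [sum_inner]
        exact Finset.sum_congr rfl fun k _ => (real_inner_smul_left _ _ _).symm
      have e2 : ∑ k, p k • (gradient (F k) wt - gradient f wt) = 0 := by
        have : ∀ k, p k • (gradient (F k) wt - gradient f wt)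
            = p k • gradient (F k) wt - p k • gradient f wt := fun k => smul_sub _ _ _
        rw [Finset.sum_congr rfl fun k _ => this k, Finset.sum_sub_distrib, hgsum,
          ← Finset.sum_smul, hp1, one_smul, sub_self]
      rw [e1, e2, inner_zero_left]
    have expand : ∀ k, ‖gradient (F k) wt‖ ^ 2
        = ‖gradient (F k) wt - gradient f wt‖ ^ 2
          + 2 * ⟪gradient (F k) wt - gradient f wt, gradient f wt⟫
          + ‖gradient f wt‖ ^ 2 := by
      intro k
      conv_lhs => rw [← sub_add_cancel (gradient (F k) wt) (gradient f wt)]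
      rw [norm_add_sq_real]
    have e3 : ∑ k, p k * ‖gradient (F k) wt‖ ^ 2
        = (∑ k, p k * ‖gradient (F k) wt - gradient f wt‖ ^ 2)
          + 2 * (∑ k, p k * ⟪gradient (F k) wt - gradient f wt, gradient f wt⟫)
          + (∑ k, p k) * ‖gradient f wt‖ ^ 2 := by
      rw [Finset.mul_sum, Finset.sum_mul, ← Finset.sum_add_distrib, ← Finset.sum_add_distrib]
      apply Finset.sum_congr rfl
      intro k _
      rw [expand k]
      ring
    rw [e3, hmid, hp1]
    have hσ : σ ^ 2 ≤ σ ^ 2 / ε * ‖gradient f wt‖ ^ 2 := by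
      have h1 : σ ^ 2 / ε * ε ≤ σ ^ 2 / ε * ‖gradient f wt‖ ^ 2 :=
        mul_le_mul_of_nonneg_left hgrad (by positivity)
      rwa [div_mul_cancel₀ _ (ne_of_gt hε)] at h1
    rw [hCsq]
    nlinarith [hvar]
  have hA1nn : 0 ≤ ∑ k, p k * ‖gradient (F k) wt‖ :=
    Finset.sum_nonneg fun k _ => mul_nonneg (hp k) (norm_nonneg _)
  have hA1 : ∑ k, p k * ‖gradient (F k) wt‖ ≤ C * ‖gradient f wt‖ := by
    have cs := Finset.sum_mul_sq_le_sq_mul_sq Finset.univ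
      (fun k => Real.sqrt (p k)) (fun k => Real.sqrt (p k) * ‖gradient (F k) wt‖)
    have e1 : ∀ k, Real.sqrt (p k) * (Real.sqrt (p k) * ‖gradient (F k) wt‖)
        = p k * ‖gradient (F k) wt‖ := by
      intro k; rw [← mul_assoc, Real.mul_self_sqrt (hp k)]
    have e2 : ∀ k, Real.sqrt (p k) ^ 2 = p k := fun k => Real.sq_sqrt (hp k)
    have e3 : ∀ k, (Real.sqrt (p k) * ‖gradient (F k) wt‖) ^ 2
        = p k * ‖gradient (F k) wt‖ ^ 2 := by
      intro k; rw [mul_pow, e2 k]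
    rw [Finset.sum_congr rfl fun k _ => e1 k, Finset.sum_congr rfl fun k _ => e2 k,
      Finset.sum_congr rfl fun k _ => e3 k, hp1, one_mul] at cs
    have hsq : (∑ k, p k * ‖gradient (F k) wt‖) ^ 2 ≤ (C * ‖gradient f wt‖) ^ 2 := by
      rw [mul_pow]
      exact cs.trans hA2
    calc ∑ k, p k * ‖gradient (F k) wt‖
        = Real.sqrt ((∑ k, p k * ‖gradient (F k) wt‖) ^ 2) := (Real.sqrt_sq hA1nn).symm
      _ ≤ Real.sqrt ((C * ‖gradient f wt‖) ^ 2) := Real.sqrt_le_sqrt hsq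
      _ = C * ‖gradient f wt‖ := Real.sqrt_sq (by positivity)
  -- aggregated step
  have hsd : ∑ k, p k * ‖wplus k - wt‖
      ≤ (1 + γ) / (μ - Lm) * ∑ k, p k * ‖gradient (F k) wt‖ := by
    rw [Finset.mul_sum]
    apply Finset.sum_le_sum
    intro k _
    calc p k * ‖wplus k - wt‖ ≤ p k * ((1 + γ) * ‖gradient (F k) wt‖ / (μ - Lm)) :=
          mul_le_mul_of_nonneg_left (hd k) (hp k)
      _ = (1 + γ) / (μ - Lm) * (p k * ‖gradient (F k) wt‖) := by ring
  have hsd2 : ∑ k, p k * ‖wplus k - wt‖ ^ 2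
      ≤ ((1 + γ) / (μ - Lm)) ^ 2 * ∑ k, p k * ‖gradient (F k) wt‖ ^ 2 := by
    rw [Finset.mul_sum]
    apply Finset.sum_le_sum
    intro k _
    have h1 : ‖wplus k - wt‖ ^ 2 ≤ ((1 + γ) * ‖gradient (F k) wt‖ / (μ - Lm)) ^ 2 :=
      pow_le_pow_left₀ (norm_nonneg _) (hd k) 2
    calc p k * ‖wplus k - wt‖ ^ 2
        ≤ p k * ((1 + γ) * ‖gradient (F k) wt‖ / (μ - Lm)) ^ 2 :=
          mul_le_mul_of_nonneg_left h1 (hp k)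
      _ = ((1 + γ) / (μ - Lm)) ^ 2 * (p k * ‖gradient (F k) wt‖ ^ 2) := by ring
  have hDnorm : ‖∑ k, p k • (wplus k - wt)‖
      ≤ (1 + γ) / (μ - Lm) * ∑ k, p k * ‖gradient (F k) wt‖ := by
    calc ‖∑ k, p k • (wplus k - wt)‖ ≤ ∑ k, ‖p k • (wplus k - wt)‖ := norm_sum_le _ _
      _ = ∑ k, p k * ‖wplus k - wt‖ := by
          apply Finset.sum_congr rfl
          intro k _
          rw [norm_smul, Real.norm_eq_abs, abs_of_nonneg (hp k)]
      _ ≤ (1 + γ) / (μ - Lm) * ∑ k, p k * ‖gradient (F k) wt‖ := hsd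
  have herr : ‖μ • (∑ k, p k • (wplus k - wt)) + gradient f wt‖
      ≤ (γ + L * (1 + γ) / (μ - Lm)) * ∑ k, p k * ‖gradient (F k) wt‖ := by
    have hid2 : μ • (∑ k, p k • (wplus k - wt)) + gradient f wt
        = ∑ k, p k • (μ • (wplus k - wt) + gradient (F k) wt) := by
      rw [hgradf wt, Finset.smul_sum, ← Finset.sum_add_distrib]
      apply Finset.sum_congr rfl
      intro k _
      rw [smul_add, smul_comm μ (p k)]
    have hmdg : ∀ k, ‖μ • (wplus k - wt) + gradient (F k) wt‖
        ≤ γ * ‖gradient (F k) wt‖ + L * ‖wplus k - wt‖ := by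
      intro k
      have e : μ • (wplus k - wt) + gradient (F k) wt
          = (gradient (F k) (wplus k) + μ • (wplus k - wt))
            - (gradient (F k) (wplus k) - gradient (F k) wt) := by abel
      rw [e]
      exact (norm_sub_le _ _).trans (add_le_add (hinexact k) (hFlip' k (wplus k) wt))
    rw [hid2]
    calc ‖∑ k, p k • (μ • (wplus k - wt) + gradient (F k) wt)‖
        ≤ ∑ k, ‖p k • (μ • (wplus k - wt) + gradient (F k) wt)‖ := norm_sum_le _ _
      _ ≤ ∑ k, (γ * (p k * ‖gradient (F k) wt‖) + L * (p k * ‖wplus k - wt‖)) := by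
          apply Finset.sum_le_sum
          intro k _
          rw [norm_smul, Real.norm_eq_abs, abs_of_nonneg (hp k)]
          calc p k * ‖μ • (wplus k - wt) + gradient (F k) wt‖
              ≤ p k * (γ * ‖gradient (F k) wt‖ + L * ‖wplus k - wt‖) :=
                mul_le_mul_of_nonneg_left (hmdg k) (hp k)
            _ = γ * (p k * ‖gradient (F k) wt‖) + L * (p k * ‖wplus k - wt‖) := by ring
      _ = γ * (∑ k, p k * ‖gradient (F k) wt‖) + L * (∑ k, p k * ‖wplus k - wt‖) := by
          rw [Finset.sum_add_distrib, ← Finset.mul_sum, ← Finset.mul_sum]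
      _ ≤ (γ + L * (1 + γ) / (μ - Lm)) * ∑ k, p k * ‖gradient (F k) wt‖ := by
          have h2 : L * (∑ k, p k * ‖wplus k - wt‖)
              ≤ L * ((1 + γ) / (μ - Lm) * ∑ k, p k * ‖gradient (F k) wt‖) :=
            mul_le_mul_of_nonneg_left hsd hL
          have h3 : (γ + L * (1 + γ) / (μ - Lm)) * (∑ k, p k * ‖gradient (F k) wt‖)
              = γ * (∑ k, p k * ‖gradient (F k) wt‖)
                + L * ((1 + γ) / (μ - Lm) * ∑ k, p k * ‖gradient (F k) wt‖) := by ring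
          linarith
  have hinner : ⟪gradient f wt, ∑ k, p k • (wplus k - wt)⟫
      ≤ -(1 / μ) * ‖gradient f wt‖ ^ 2
        + 1 / μ * ((γ + L * (1 + γ) / (μ - Lm)) * (C * ‖gradient f wt‖)) * ‖gradient f wt‖ := by
    have hiden : ⟪gradient f wt, ∑ k, p k • (wplus k - wt)⟫
        = 1 / μ * (⟪gradient f wt, μ • (∑ k, p k • (wplus k - wt)) + gradient f wt⟫
          - ‖gradient f wt‖ ^ 2) := by
      rw [inner_add_right, real_inner_smul_right, real_inner_self_eq_norm_sq]
      field_simp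
      ring
    have h5 : ⟪gradient f wt, μ • (∑ k, p k • (wplus k - wt)) + gradient f wt⟫
        ≤ (γ + L * (1 + γ) / (μ - Lm)) * (C * ‖gradient f wt‖) * ‖gradient f wt‖ := by
      have h6 : ‖μ • (∑ k, p k • (wplus k - wt)) + gradient f wt‖
          ≤ (γ + L * (1 + γ) / (μ - Lm)) * (C * ‖gradient f wt‖) := by
        refine herr.trans ?_
        apply mul_le_mul_of_nonneg_left hA1
        positivity
      calc ⟪gradient f wt, μ • (∑ k, p k • (wplus k - wt)) + gradient f wt⟫
          ≤ ‖gradient f wt‖ * ‖μ • (∑ k, p k • (wplus k - wt)) + gradient f wt‖ :=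
            real_inner_le_norm _ _
        _ ≤ ‖gradient f wt‖ * ((γ + L * (1 + γ) / (μ - Lm)) * (C * ‖gradient f wt‖)) :=
            mul_le_mul_of_nonneg_left h6 (norm_nonneg _)
        _ = (γ + L * (1 + γ) / (μ - Lm)) * (C * ‖gradient f wt‖) * ‖gradient f wt‖ := by ring
    rw [hiden]
    have h7 : 0 ≤ 1 / μ := by positivity
    nlinarith [mul_le_mul_of_nonneg_left h5 h7]
  have hwbar : f (wt + ∑ k, p k • (wplus k - wt)) ≤ f wt
      + ⟪gradient f wt, ∑ k, p k • (wplus k - wt)⟫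
      + L / 2 * ‖∑ k, p k • (wplus k - wt)‖ ^ 2 := by
    have h := fedprox_descent_lemma f hfdiff hL hflip wt (wt + ∑ k, p k • (wplus k - wt))
    rwa [add_sub_cancel_left] at h
  -- sampling step
  set wbar : E := wt + ∑ k, p k • (wplus k - wt) with hwbardef
  set V : ℝ := ∑ k, p k * ‖wplus k - wbar‖ ^ 2 with hVdef
  have hprnn : ∀ s : Fin K → Fin N, 0 ≤ ∏ j, p (s j) :=
    fun s => Finset.prod_nonneg fun j _ => hp (s j)
  have hpr1 : ∑ s : Fin K → Fin N, ∏ j, p (s j) = 1 := by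
    rw [fedprox_master_sum (fun _ k => p k)]
    simp [hp1]
  have hYsum : ∑ k, p k • (wplus k - wbar) = 0 := by
    have e : ∀ k, p k • (wplus k - wbar)
        = p k • (wplus k - wt) - p k • (∑ k', p k' • (wplus k' - wt)) := by
      intro k
      rw [← smul_sub]
      congr 1
      rw [hwbardef]
      abel
    rw [Finset.sum_congr rfl fun k _ => e k, Finset.sum_sub_distrib, ← Finset.sum_smul,
      hp1, one_smul, sub_self]
  have hAs : ∀ s : Fin K → Fin N,
      (1 / (K : ℝ)) • (∑ j, wplus (s j)) - wbar
        = (1 / (K : ℝ)) • ∑ j, (wplus (s j) - wbar) := by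
    intro s
    have e1 : ∑ j : Fin K, (wplus (s j) - wbar) = (∑ j, wplus (s j)) - K • wbar := by
      rw [Finset.sum_sub_distrib, Finset.sum_const, Finset.card_univ, Fintype.card_fin]
    rw [e1, smul_sub]
    congr 1
    rw [← Nat.cast_smul_eq_nsmul ℝ K wbar, smul_smul, one_div,
      inv_mul_cancel₀ hKne, one_smul]
  have hstep : ∀ s : Fin K → Fin N, f ((1 / (K : ℝ)) • ∑ j, wplus (s j)) ≤
      f wbar + ⟪gradient f wbar, (1 / (K : ℝ)) • ∑ j, (wplus (s j) - wbar)⟫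
        + L / 2 * ‖(1 / (K : ℝ)) • ∑ j, (wplus (s j) - wbar)‖ ^ 2 := by
    intro s
    have h := fedprox_descent_lemma f hfdiff hL hflip wbar ((1 / (K : ℝ)) • ∑ j, wplus (s j))
    rwa [hAs s] at h
  -- linear term vanishes
  have hz : ∑ k, p k * ⟪gradient f wbar, wplus k - wbar⟫ = 0 := by
    have e : ∑ k, p k * ⟪gradient f wbar, wplus k - wbar⟫
        = ⟪gradient f wbar, ∑ k, p k • (wplus k - wbar)⟫ := by
      rw [inner_sum]
      exact Finset.sum_congr rfl fun k _ => (real_inner_smul_right _ _ _).symm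
    rw [e, hYsum, inner_zero_right]
  have hlin : ∑ s : Fin K → Fin N,
      (∏ j, p (s j)) * ⟪gradient f wbar, (1 / (K : ℝ)) • ∑ j, (wplus (s j) - wbar)⟫ = 0 := by
    have e1 : ∀ s : Fin K → Fin N,
        (∏ j, p (s j)) * ⟪gradient f wbar, (1 / (K : ℝ)) • ∑ j, (wplus (s j) - wbar)⟫
        = (1 / (K : ℝ)) * ∑ j, ((∏ j', p (s j')) * ⟪gradient f wbar, wplus (s j) - wbar⟫) := by
      intro s
      rw [real_inner_smul_right, inner_sum]
      simp only [Finset.mul_sum]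
      apply Finset.sum_congr rfl
      intro j _
      ring
    calc ∑ s : Fin K → Fin N,
        (∏ j, p (s j)) * ⟪gradient f wbar, (1 / (K : ℝ)) • ∑ j, (wplus (s j) - wbar)⟫
        = ∑ s : Fin K → Fin N,
            (1 / (K : ℝ)) * ∑ j, ((∏ j', p (s j')) * ⟪gradient f wbar, wplus (s j) - wbar⟫) :=
          Finset.sum_congr rfl fun s _ => e1 s
      _ = (1 / (K : ℝ)) * ∑ s : Fin K → Fin N,
            ∑ j, ((∏ j', p (s j')) * ⟪gradient f wbar, wplus (s j) - wbar⟫) := by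
          rw [Finset.mul_sum]
      _ = (1 / (K : ℝ)) * ∑ j : Fin K, ∑ s : Fin K → Fin N,
            ((∏ j', p (s j')) * ⟪gradient f wbar, wplus (s j) - wbar⟫) := by
          rw [Finset.sum_comm]
      _ = (1 / (K : ℝ)) * ∑ j : Fin K, ∑ k, p k * ⟪gradient f wbar, wplus k - wbar⟫ := by
          congr 1
          exact Finset.sum_congr rfl fun j _ =>
            fedprox_marg1 p hp1 j (fun k => ⟪gradient f wbar, wplus k - wbar⟫)
      _ = 0 := by
          rw [Finset.sum_congr rfl fun (j : Fin K) (_ : j ∈ Finset.univ) => hz]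
          simp
  -- quadratic term
  have hq1 : ∀ s : Fin K → Fin N, ‖(1 / (K : ℝ)) • ∑ j, (wplus (s j) - wbar)‖ ^ 2
      = (1 / (K : ℝ)) ^ 2 * ∑ j, ∑ j', ⟪wplus (s j) - wbar, wplus (s j') - wbar⟫ := by
    intro s
    rw [norm_smul, mul_pow, Real.norm_eq_abs, abs_of_nonneg (by positivity : (0:ℝ) ≤ 1 / (K:ℝ))]
    congr 1
    rw [← real_inner_self_eq_norm_sq, sum_inner]
    exact Finset.sum_congr rfl fun j _ => inner_sum _ _ _
  have hcross : ∀ j j' : Fin K, ∑ s : Fin K → Fin N,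
      (∏ jj, p (s jj)) * ⟪wplus (s j) - wbar, wplus (s j') - wbar⟫
      = if j = j' then V else 0 := by
    intro j j'
    by_cases h : j = j'
    · subst h
      rw [if_pos rfl, fedprox_marg1 p hp1 j (fun k => ⟪wplus k - wbar, wplus k - wbar⟫), hVdef]
      exact Finset.sum_congr rfl fun k _ => by rw [real_inner_self_eq_norm_sq]
    · rw [if_neg h, fedprox_marg2 p hp1 h (fun k l => ⟪wplus k - wbar, wplus l - wbar⟫)]
      have e : ∀ k, ∑ l, (p k * p l) * ⟪wplus k - wbar, wplus l - wbar⟫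
          = p k * ⟪wplus k - wbar, ∑ l, p l • (wplus l - wbar)⟫ := by
        intro k
        rw [inner_sum, Finset.mul_sum]
        apply Finset.sum_congr rfl
        intro l _
        rw [real_inner_smul_right]
        ring
      rw [Finset.sum_congr rfl fun k _ => e k]
      rw [Finset.sum_congr rfl fun (k : Fin N) (_ : k ∈ Finset.univ) => by
        rw [hYsum, inner_zero_right, mul_zero]]
      simp
  have hquad : ∑ s : Fin K → Fin N,
      (∏ j, p (s j)) * ‖(1 / (K : ℝ)) • ∑ j, (wplus (s j) - wbar)‖ ^ 2 = V / K := by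
    have e1 : ∀ s : Fin K → Fin N,
        (∏ j, p (s j)) * ‖(1 / (K : ℝ)) • ∑ j, (wplus (s j) - wbar)‖ ^ 2
        = (1 / (K : ℝ)) ^ 2 * ∑ j, ∑ j',
            ((∏ jj, p (s jj)) * ⟪wplus (s j) - wbar, wplus (s j') - wbar⟫) := by
      intro s
      rw [hq1 s]
      simp only [Finset.mul_sum]
      apply Finset.sum_congr rfl
      intro j _
      apply Finset.sum_congr rfl
      intro j' _
      ring
    calc ∑ s : Fin K → Fin N,
        (∏ j, p (s j)) * ‖(1 / (K : ℝ)) • ∑ j, (wplus (s j) - wbar)‖ ^ 2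
        = ∑ s : Fin K → Fin N, (1 / (K : ℝ)) ^ 2 * ∑ j, ∑ j',
            ((∏ jj, p (s jj)) * ⟪wplus (s j) - wbar, wplus (s j') - wbar⟫) :=
          Finset.sum_congr rfl fun s _ => e1 s
      _ = (1 / (K : ℝ)) ^ 2 * ∑ s : Fin K → Fin N, ∑ j, ∑ j',
            ((∏ jj, p (s jj)) * ⟪wplus (s j) - wbar, wplus (s j') - wbar⟫) := by
          rw [Finset.mul_sum]
      _ = (1 / (K : ℝ)) ^ 2 * ∑ j : Fin K, ∑ s : Fin K → Fin N, ∑ j',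
            ((∏ jj, p (s jj)) * ⟪wplus (s j) - wbar, wplus (s j') - wbar⟫) := by
          rw [Finset.sum_comm]
      _ = (1 / (K : ℝ)) ^ 2 * ∑ j : Fin K, ∑ j' : Fin K, ∑ s : Fin K → Fin N,
            ((∏ jj, p (s jj)) * ⟪wplus (s j) - wbar, wplus (s j') - wbar⟫) := by
          congr 1
          exact Finset.sum_congr rfl fun j _ => Finset.sum_comm
      _ = (1 / (K : ℝ)) ^ 2 * ∑ j : Fin K, ∑ j' : Fin K, (if j = j' then V else 0) := by
          congr 1
          apply Finset.sum_congr rfl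
          intro j _
          exact Finset.sum_congr rfl fun j' _ => hcross j j'
      _ = (1 / (K : ℝ)) ^ 2 * ∑ j : Fin K, V := by
          congr 1
          apply Finset.sum_congr rfl
          intro j _
          rw [Finset.sum_ite_eq Finset.univ j (fun _ => V), if_pos (Finset.mem_univ j)]
      _ = V / K := by
          rw [Finset.sum_const, Finset.card_univ, Fintype.card_fin, nsmul_eq_mul]
          field_simp
  have hsamp : ∑ s : Fin K → Fin N, (∏ j, p (s j)) * f ((1 / (K : ℝ)) • ∑ j, wplus (s j))
      ≤ f wbar + L / 2 * (V / K) := by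
    have e : ∀ s : Fin K → Fin N,
        (∏ j, p (s j)) * (f wbar
          + ⟪gradient f wbar, (1 / (K : ℝ)) • ∑ j, (wplus (s j) - wbar)⟫
          + L / 2 * ‖(1 / (K : ℝ)) • ∑ j, (wplus (s j) - wbar)‖ ^ 2)
        = f wbar * (∏ j, p (s j))
          + (∏ j, p (s j)) * ⟪gradient f wbar, (1 / (K : ℝ)) • ∑ j, (wplus (s j) - wbar)⟫
          + L / 2 * ((∏ j, p (s j)) * ‖(1 / (K : ℝ)) • ∑ j, (wplus (s j) - wbar)‖ ^ 2) :=
      fun s => by ring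
    calc ∑ s : Fin K → Fin N, (∏ j, p (s j)) * f ((1 / (K : ℝ)) • ∑ j, wplus (s j))
        ≤ ∑ s : Fin K → Fin N, (∏ j, p (s j)) * (f wbar
            + ⟪gradient f wbar, (1 / (K : ℝ)) • ∑ j, (wplus (s j) - wbar)⟫
            + L / 2 * ‖(1 / (K : ℝ)) • ∑ j, (wplus (s j) - wbar)‖ ^ 2) :=
          Finset.sum_le_sum fun s _ => mul_le_mul_of_nonneg_left (hstep s) (hprnn s)
      _ = f wbar * (∑ s : Fin K → Fin N, ∏ j, p (s j))
          + (∑ s : Fin K → Fin N,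
              (∏ j, p (s j)) * ⟪gradient f wbar, (1 / (K : ℝ)) • ∑ j, (wplus (s j) - wbar)⟫)
          + L / 2 * (∑ s : Fin K → Fin N,
              (∏ j, p (s j)) * ‖(1 / (K : ℝ)) • ∑ j, (wplus (s j) - wbar)‖ ^ 2) := by
          rw [Finset.sum_congr rfl fun s _ => e s, Finset.sum_add_distrib,
            Finset.sum_add_distrib, ← Finset.mul_sum, ← Finset.mul_sum]
      _ = f wbar + L / 2 * (V / K) := by
          rw [hpr1, mul_one, hlin, hquad, add_zero]
  -- variance bound
  have hDle : ‖∑ k, p k • (wplus k - wt)‖ ≤ (1 + γ) / (μ - Lm) * (C * ‖gradient f wt‖) :=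
    hDnorm.trans (mul_le_mul_of_nonneg_left hA1 (by positivity))
  have hDsq : ‖∑ k, p k • (wplus k - wt)‖ ^ 2
      ≤ ((1 + γ) / (μ - Lm) * (C * ‖gradient f wt‖)) ^ 2 :=
    pow_le_pow_left₀ (norm_nonneg _) hDle 2
  have hVk : ∀ k, ‖wplus k - wbar‖ ^ 2
      ≤ 2 * ‖wplus k - wt‖ ^ 2 + 2 * ‖∑ k', p k' • (wplus k' - wt)‖ ^ 2 := by
    intro k
    have e : wplus k - wbar = (wplus k - wt) - ∑ k', p k' • (wplus k' - wt) := by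
      rw [hwbardef]
      abel
    have h1 : ‖wplus k - wbar‖ ≤ ‖wplus k - wt‖ + ‖∑ k', p k' • (wplus k' - wt)‖ := by
      rw [e]
      exact norm_sub_le _ _
    have h2 : ‖wplus k - wbar‖ ^ 2
        ≤ (‖wplus k - wt‖ + ‖∑ k', p k' • (wplus k' - wt)‖) ^ 2 :=
      pow_le_pow_left₀ (norm_nonneg _) h1 2
    exact h2.trans (fedprox_sq_add_le _ _)
  have hVbound : V ≤ 4 * ((1 + γ) / (μ - Lm)) ^ 2 * (C ^ 2 * ‖gradient f wt‖ ^ 2) := by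
    have h1 : V ≤ ∑ k, p k * (2 * ‖wplus k - wt‖ ^ 2
        + 2 * ‖∑ k', p k' • (wplus k' - wt)‖ ^ 2) := by
      rw [hVdef]
      exact Finset.sum_le_sum fun k _ => mul_le_mul_of_nonneg_left (hVk k) (hp k)
    have h2 : ∑ k, p k * (2 * ‖wplus k - wt‖ ^ 2 + 2 * ‖∑ k', p k' • (wplus k' - wt)‖ ^ 2)
        = 2 * (∑ k, p k * ‖wplus k - wt‖ ^ 2)
          + 2 * ‖∑ k', p k' • (wplus k' - wt)‖ ^ 2 := by
      have e : ∀ k, p k * (2 * ‖wplus k - wt‖ ^ 2 + 2 * ‖∑ k', p k' • (wplus k' - wt)‖ ^ 2)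
          = 2 * (p k * ‖wplus k - wt‖ ^ 2)
            + p k * (2 * ‖∑ k', p k' • (wplus k' - wt)‖ ^ 2) := fun k => by ring
      rw [Finset.sum_congr rfl fun k _ => e k, Finset.sum_add_distrib, ← Finset.mul_sum,
        ← Finset.sum_mul, hp1, one_mul]
    have h3 : ∑ k, p k * ‖wplus k - wt‖ ^ 2
        ≤ ((1 + γ) / (μ - Lm)) ^ 2 * (C ^ 2 * ‖gradient f wt‖ ^ 2) :=
      hsd2.trans (mul_le_mul_of_nonneg_left hA2 (by positivity))
    have h4 : ((1 + γ) / (μ - Lm) * (C * ‖gradient f wt‖)) ^ 2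
        = ((1 + γ) / (μ - Lm)) ^ 2 * (C ^ 2 * ‖gradient f wt‖ ^ 2) := by ring
    rw [h4] at hDsq
    linarith
  -- comparison of rates
  have hρcmp : ρ ≤ 1 / μ - (γ / μ + L * (1 + γ) / ((μ - Lm) * μ)) * C
      - L * (1 + γ) ^ 2 / (2 * (μ - Lm) ^ 2) * C ^ 2
      - 2 * L * (1 + γ) ^ 2 / ((μ - Lm) ^ 2 * K) * C ^ 2 := by
    rw [hρ]
    have hkey : 1 / μ - (γ / μ + Real.sqrt 2 * (1 + γ) / ((μ - Lm) * Real.sqrt K)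
          + L * (1 + γ) / ((μ - Lm) * μ)) * C
        - (L * (1 + γ) ^ 2 / (2 * (μ - Lm) ^ 2)
          + L * (1 + γ) ^ 2 * (2 * Real.sqrt (2 * K) + 2) / ((μ - Lm) ^ 2 * K)) * C ^ 2
        = (1 / μ - (γ / μ + L * (1 + γ) / ((μ - Lm) * μ)) * C
            - L * (1 + γ) ^ 2 / (2 * (μ - Lm) ^ 2) * C ^ 2
            - 2 * L * (1 + γ) ^ 2 / ((μ - Lm) ^ 2 * K) * C ^ 2)
          - (Real.sqrt 2 * (1 + γ) / ((μ - Lm) * Real.sqrt K) * C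
            + L * (1 + γ) ^ 2 * (2 * Real.sqrt (2 * K)) / ((μ - Lm) ^ 2 * K) * C ^ 2) := by
      ring
    rw [hkey]
    have h1 : 0 ≤ Real.sqrt 2 * (1 + γ) / ((μ - Lm) * Real.sqrt K) * C :=
      mul_nonneg (div_nonneg (mul_nonneg (Real.sqrt_nonneg 2) h1γ)
        (mul_nonneg hmb.le (Real.sqrt_nonneg K))) hC0
    have h2 : 0 ≤ L * (1 + γ) ^ 2 * (2 * Real.sqrt (2 * K)) / ((μ - Lm) ^ 2 * K) * C ^ 2 :=
      mul_nonneg (div_nonneg (mul_nonneg (mul_nonneg hL (sq_nonneg _))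
        (mul_nonneg (by norm_num) (Real.sqrt_nonneg _)))
        (mul_nonneg (sq_nonneg _) hKpos.le)) (sq_nonneg C)
    linarith
  -- final expansion and combination
  have hexp : f wt - (1 / μ - (γ / μ + L * (1 + γ) / ((μ - Lm) * μ)) * C
        - L * (1 + γ) ^ 2 / (2 * (μ - Lm) ^ 2) * C ^ 2
        - 2 * L * (1 + γ) ^ 2 / ((μ - Lm) ^ 2 * K) * C ^ 2) * ‖gradient f wt‖ ^ 2
      = f wt + (-(1 / μ) * ‖gradient f wt‖ ^ 2
          + 1 / μ * ((γ + L * (1 + γ) / (μ - Lm)) * (C * ‖gradient f wt‖)) * ‖gradient f wt‖)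
        + L / 2 * ((1 + γ) / (μ - Lm) * (C * ‖gradient f wt‖)) ^ 2
        + L / 2 * ((4 * ((1 + γ) / (μ - Lm)) ^ 2 * (C ^ 2 * ‖gradient f wt‖ ^ 2)) / K) := by
    field_simp
    ring
  have hquadle : L / 2 * (V / K)
      ≤ L / 2 * ((4 * ((1 + γ) / (μ - Lm)) ^ 2 * (C ^ 2 * ‖gradient f wt‖ ^ 2)) / K) := by
    apply mul_le_mul_of_nonneg_left _ (by positivity : (0:ℝ) ≤ L / 2)
    exact (div_le_div_iff_of_pos_right hKpos).mpr hVbound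
  have hΔquad : L / 2 * ‖∑ k, p k • (wplus k - wt)‖ ^ 2
      ≤ L / 2 * ((1 + γ) / (μ - Lm) * (C * ‖gradient f wt‖)) ^ 2 :=
    mul_le_mul_of_nonneg_left hDsq (by positivity)
  calc ∑ s : Fin K → Fin N, (∏ j, p (s j)) * f ((1 / (K : ℝ)) • ∑ j, wplus (s j))
      ≤ f wbar + L / 2 * (V / K) := hsamp
    _ ≤ f wt - (1 / μ - (γ / μ + L * (1 + γ) / ((μ - Lm) * μ)) * C
          - L * (1 + γ) ^ 2 / (2 * (μ - Lm) ^ 2) * C ^ 2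
          - 2 * L * (1 + γ) ^ 2 / ((μ - Lm) ^ 2 * K) * C ^ 2) * ‖gradient f wt‖ ^ 2 := by
        rw [hexp]
        linarith
    _ ≤ f wt - ρ * ‖gradient f wt‖ ^ 2 := by
        have := mul_le_mul_of_nonneg_right hρcmp (sq_nonneg ‖gradient f wt‖)
        linarith
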